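/- For the 1-cycle of the impulsive cascade system with parameters (λ,T), the minimum y_min = λz(τ₁,T) and maximum y_max = λz(τ₂,T) of the output over one period satisfy 0 < y_min < X₃ < y_max, where X₃ = λ C(e^{-AT}-I)^{-1}B is the output value at impulse times. -/

import Mathlib

open Matrix Set Filter

noncomputable def Acas (a₁ a₂ a₃ g₁ g₂ : ℝ) : Matrix (Fin 3) (Fin 3) ℝ :=
  !![-a₁, 0, 0; g₁, -a₂, 0; 0, g₂, -a₃]

def Bcas : Fin 3 → ℝ := ![1, 0, 0]

/-- impulse response g(t) = C e^{tA} B with C = (0,0,1) -/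
noncomputable def impResp (a₁ a₂ a₃ g₁ g₂ : ℝ) (t : ℝ) : ℝ :=
  ((NormedSpace.exp (t • Acas a₁ a₂ a₃ g₁ g₂)) *ᵥ Bcas) 2

/-- z(τ,T) = C e^{Aτ} (I - e^{AT})⁻¹ B -/
noncomputable def zfun (a₁ a₂ a₃ g₁ g₂ : ℝ) (τ T : ℝ) : ℝ :=
  ((NormedSpace.exp (τ • Acas a₁ a₂ a₃ g₁ g₂) *
    (1 - NormedSpace.exp (T • Acas a₁ a₂ a₃ g₁ g₂))⁻¹) *ᵥ Bcas) 2

noncomputable def zmaxF (a₁ a₂ a₃ g₁ g₂ T : ℝ) : ℝ :=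
  sSup ((fun τ => zfun a₁ a₂ a₃ g₁ g₂ τ T) '' Set.Icc 0 T)

noncomputable def zminF (a₁ a₂ a₃ g₁ g₂ T : ℝ) : ℝ :=
  sInf ((fun τ => zfun a₁ a₂ a₃ g₁ g₂ τ T) '' Set.Icc 0 T)

lemma diag_expand (u v w : ℝ) :
    Matrix.diagonal ![u, v, w] = !![u,0,0; 0,v,0; 0,0,w] := by
  ext i j
  fin_cases i <;> fin_cases j <;> simp [Matrix.diagonal_apply, Matrix.vecHead, Matrix.vecTail]

section Mx
variable (a₁ a₂ a₃ g₁ g₂ : ℝ)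

noncomputable def Pm : Matrix (Fin 3) (Fin 3) ℝ :=
  !![1,0,0; g₁/(a₂-a₁),1,0; g₁*g₂/((a₂-a₁)*(a₃-a₁)), g₂/(a₃-a₂),1]

noncomputable def Qm : Matrix (Fin 3) (Fin 3) ℝ :=
  !![1,0,0; -(g₁/(a₂-a₁)),1,0; g₁*g₂/((a₃-a₁)*(a₃-a₂)), -(g₂/(a₃-a₂)),1]

variable {a₁ a₂ a₃} (h12 : a₂ - a₁ ≠ 0) (h13 : a₃ - a₁ ≠ 0) (h23 : a₃ - a₂ ≠ 0)
include h12 h13 h23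

lemma hPQ : Pm a₁ a₂ a₃ g₁ g₂ * Qm a₁ a₂ a₃ g₁ g₂ = 1 := by
  ext i j
  fin_cases i <;> fin_cases j <;>
    simp [Pm, Qm, Matrix.mul_apply, Fin.sum_univ_three, Matrix.one_apply] <;>
    field_simp <;> ring

lemma hQP : Qm a₁ a₂ a₃ g₁ g₂ * Pm a₁ a₂ a₃ g₁ g₂ = 1 := by
  ext i j
  fin_cases i <;> fin_cases j <;>
    simp [Pm, Qm, Matrix.mul_apply, Fin.sum_univ_three, Matrix.one_apply] <;>
    field_simp <;> ring

lemma hAdiag : Acas a₁ a₂ a₃ g₁ g₂ =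
    Pm a₁ a₂ a₃ g₁ g₂ * Matrix.diagonal ![-a₁,-a₂,-a₃] * Qm a₁ a₂ a₃ g₁ g₂ := by
  rw [diag_expand]
  ext i j
  fin_cases i <;> fin_cases j <;>
    simp [Pm, Qm, Acas, Matrix.mul_apply, Fin.sum_univ_three] <;>
    field_simp <;> ring

end Mx

section Exp
variable {a₁ a₂ a₃ : ℝ} (g₁ g₂ : ℝ) (h12 : a₂ - a₁ ≠ 0) (h13 : a₃ - a₁ ≠ 0) (h23 : a₃ - a₂ ≠ 0)
include h12 h13 h23

lemma Pm_unit : IsUnit (Pm a₁ a₂ a₃ g₁ g₂) :=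
  ⟨⟨Pm a₁ a₂ a₃ g₁ g₂, Qm a₁ a₂ a₃ g₁ g₂, hPQ g₁ g₂ h12 h13 h23, hQP g₁ g₂ h12 h13 h23⟩, rfl⟩

lemma Pm_inv : (Pm a₁ a₂ a₃ g₁ g₂)⁻¹ = Qm a₁ a₂ a₃ g₁ g₂ :=
  Matrix.inv_eq_right_inv (hPQ g₁ g₂ h12 h13 h23)

lemma exp_Acas (t : ℝ) : NormedSpace.exp (t • Acas a₁ a₂ a₃ g₁ g₂) =
    Pm a₁ a₂ a₃ g₁ g₂ *
      Matrix.diagonal (fun i => Real.exp (t * (![-a₁,-a₂,-a₃] : Fin 3 → ℝ) i)) *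
      Qm a₁ a₂ a₃ g₁ g₂ := by
  have h1 : t • Acas a₁ a₂ a₃ g₁ g₂ =
      Pm a₁ a₂ a₃ g₁ g₂ * Matrix.diagonal (fun i => t * (![-a₁,-a₂,-a₃] : Fin 3 → ℝ) i) *
        Qm a₁ a₂ a₃ g₁ g₂ := by
    rw [hAdiag g₁ g₂ h12 h13 h23, ← Matrix.smul_mul, ← Matrix.mul_smul, ← Matrix.diagonal_smul]
    congr 1
  rw [h1, ← Pm_inv g₁ g₂ h12 h13 h23,
    Matrix.exp_conj _ _ (Pm_unit g₁ g₂ h12 h13 h23), Matrix.exp_diagonal, Pi.exp_def]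
  simp [Real.exp_eq_exp_ℝ]

end Exp

lemma diag_expand' (f : Fin 3 → ℝ) :
    Matrix.diagonal f = !![f 0,0,0; 0,f 1,0; 0,0,f 2] := by
  ext i j
  fin_cases i <;> fin_cases j <;>
    simp [Matrix.diagonal_apply, Matrix.vecHead, Matrix.vecTail]

section Closed
variable {a₁ a₂ a₃ : ℝ} (g₁ g₂ : ℝ) (h12 : a₂ - a₁ ≠ 0) (h13 : a₃ - a₁ ≠ 0) (h23 : a₃ - a₂ ≠ 0)
include h12 h13 h23

lemma cjMul (u v : Fin 3 → ℝ) :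
    (Pm a₁ a₂ a₃ g₁ g₂ * Matrix.diagonal u * Qm a₁ a₂ a₃ g₁ g₂) *
      (Pm a₁ a₂ a₃ g₁ g₂ * Matrix.diagonal v * Qm a₁ a₂ a₃ g₁ g₂) =
    Pm a₁ a₂ a₃ g₁ g₂ * Matrix.diagonal (fun i => u i * v i) * Qm a₁ a₂ a₃ g₁ g₂ := by
  have h := hQP g₁ g₂ h12 h13 h23
  calc (Pm a₁ a₂ a₃ g₁ g₂ * Matrix.diagonal u * Qm a₁ a₂ a₃ g₁ g₂) *
      (Pm a₁ a₂ a₃ g₁ g₂ * Matrix.diagonal v * Qm a₁ a₂ a₃ g₁ g₂)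
      = Pm a₁ a₂ a₃ g₁ g₂ * (Matrix.diagonal u *
          ((Qm a₁ a₂ a₃ g₁ g₂ * Pm a₁ a₂ a₃ g₁ g₂) * Matrix.diagonal v)) *
          Qm a₁ a₂ a₃ g₁ g₂ := by
        simp only [Matrix.mul_assoc]
    _ = _ := by rw [h, Matrix.one_mul, Matrix.diagonal_mul_diagonal]

lemma one_sub_conj (u : Fin 3 → ℝ) :
    1 - Pm a₁ a₂ a₃ g₁ g₂ * Matrix.diagonal u * Qm a₁ a₂ a₃ g₁ g₂ =
    Pm a₁ a₂ a₃ g₁ g₂ * Matrix.diagonal (fun i => 1 - u i) * Qm a₁ a₂ a₃ g₁ g₂ := by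
  have h : (Matrix.diagonal (fun i => 1 - u i) : Matrix (Fin 3) (Fin 3) ℝ)
      = 1 - Matrix.diagonal u := by
    rw [← Matrix.diagonal_one, ← Matrix.diagonal_sub]
  rw [h, Matrix.mul_sub, Matrix.sub_mul, Matrix.mul_one, hPQ g₁ g₂ h12 h13 h23]

lemma cjInv (w : Fin 3 → ℝ) (hw : ∀ i, w i ≠ 0) :
    (Pm a₁ a₂ a₃ g₁ g₂ * Matrix.diagonal w * Qm a₁ a₂ a₃ g₁ g₂)⁻¹ =
    Pm a₁ a₂ a₃ g₁ g₂ * Matrix.diagonal (fun i => (w i)⁻¹) * Qm a₁ a₂ a₃ g₁ g₂ := by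
  apply Matrix.inv_eq_right_inv
  rw [cjMul g₁ g₂ h12 h13 h23]
  have : (fun i => w i * (w i)⁻¹) = fun _ : Fin 3 => (1:ℝ) := by
    funext i; exact mul_inv_cancel₀ (hw i)
  rw [this, Matrix.diagonal_one, Matrix.mul_one, hPQ g₁ g₂ h12 h13 h23]

end Closed

noncomputable def Zc (a₁ a₂ a₃ g₁ g₂ T τ : ℝ) : ℝ :=
  g₁*g₂/((a₂-a₁)*(a₃-a₁)) * (Real.exp (-(a₁*τ)) / (1 - Real.exp (-(a₁*T))))
  + g₁*g₂/((a₁-a₂)*(a₃-a₂)) * (Real.exp (-(a₂*τ)) / (1 - Real.exp (-(a₂*T))))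
  + g₁*g₂/((a₁-a₃)*(a₂-a₃)) * (Real.exp (-(a₃*τ)) / (1 - Real.exp (-(a₃*T))))

section ZE
variable {a₁ a₂ a₃ : ℝ} (g₁ g₂ : ℝ) (h12 : a₂ - a₁ ≠ 0) (h13 : a₃ - a₁ ≠ 0) (h23 : a₃ - a₂ ≠ 0)
  {T : ℝ} (hT1 : 1 - Real.exp (-(a₁*T)) ≠ 0) (hT2 : 1 - Real.exp (-(a₂*T)) ≠ 0)
  (hT3 : 1 - Real.exp (-(a₃*T)) ≠ 0)
include h12 h13 h23 hT1 hT2 hT3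

set_option maxHeartbeats 2000000 in
lemma zfun_eq (τ : ℝ) : zfun a₁ a₂ a₃ g₁ g₂ τ T = Zc a₁ a₂ a₃ g₁ g₂ T τ := by
  have hw : ∀ i : Fin 3, (1 - Real.exp (T * (![-a₁,-a₂,-a₃] : Fin 3 → ℝ) i)) ≠ 0 := by
    intro i
    fin_cases i
    · simpa [show T * (-a₁) = -(a₁*T) by ring] using hT1
    · simpa [show T * (-a₂) = -(a₂*T) by ring] using hT2
    · simpa [show T * (-a₃) = -(a₃*T) by ring] using hT3
  unfold zfun
  rw [exp_Acas g₁ g₂ h12 h13 h23 τ, exp_Acas g₁ g₂ h12 h13 h23 T,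
    one_sub_conj g₁ g₂ h12 h13 h23, cjInv g₁ g₂ h12 h13 h23 _ hw,
    cjMul g₁ g₂ h12 h13 h23, diag_expand']
  simp [Pm, Qm, Zc, Matrix.mul_apply, Matrix.mulVec, dotProduct, Bcas,
    Fin.sum_univ_three]
  rw [show -(τ*a₁) = -(a₁*τ) by ring, show -(τ*a₂) = -(a₂*τ) by ring,
    show -(τ*a₃) = -(a₃*τ) by ring, show -(T*a₁) = -(a₁*T) by ring,
    show -(T*a₂) = -(a₂*T) by ring, show -(T*a₃) = -(a₃*T) by ring]
  have h21 : a₁ - a₂ ≠ 0 := by intro h; exact h12 (by linarith)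
  have h31 : a₁ - a₃ ≠ 0 := by intro h; exact h13 (by linarith)
  have h32 : a₂ - a₃ ≠ 0 := by intro h; exact h23 (by linarith)
  field_simp
  ring

end ZE


noncomputable def DD (f : ℝ → ℝ) (a b c : ℝ) : ℝ :=
  f a/((b-a)*(c-a)) + f b/((a-b)*(c-b)) + f c/((a-c)*(b-c))

lemma chordIneq {f : ℝ → ℝ} {s : Set ℝ} (hf : StrictConvexOn ℝ s f) {x y z : ℝ}
    (hx : x ∈ s) (hz : z ∈ s) (hxy : x < y) (hyz : y < z) :
    (z-x)*f y < (z-y)*f x + (y-x)*f z := by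
  have hxz : x < z := hxy.trans hyz
  have hzx : (0:ℝ) < z - x := by linarith
  have hne : z - x ≠ 0 := ne_of_gt hzx
  have ha : 0 < (z-y)/(z-x) := div_pos (by linarith) hzx
  have hb : 0 < (y-x)/(z-x) := div_pos (by linarith) hzx
  have hab : (z-y)/(z-x) + (y-x)/(z-x) = 1 := by field_simp; ring
  have hkey : (z-y)/(z-x) * x + (y-x)/(z-x) * z = y := by
    field_simp
    ring
  have h2 := hf.2 hx hz (ne_of_lt hxz) ha hb hab
  rw [smul_eq_mul, smul_eq_mul, smul_eq_mul, smul_eq_mul, hkey] at h2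
  have h3 := mul_lt_mul_of_pos_left h2 hzx
  have h4 : (z-x) * ((z-y)/(z-x) * f x + (y-x)/(z-x) * f z)
      = (z-y)*f x + (y-x)*f z := by field_simp
  linarith [h3, h4]

lemma DD_pos {f : ℝ → ℝ} {a b c : ℝ} (hab : a < b) (hbc : b < c)
    (h : (c-a)*f b < (c-b)*f a + (b-a)*f c) : 0 < DD f a b c := by
  have h1 : (0:ℝ) < b - a := by linarith
  have h2 : (0:ℝ) < c - a := by linarith
  have h3 : (0:ℝ) < c - b := by linarith
  have hD : 0 < (b-a)*((c-a)*(c-b)) := by positivity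
  have n1 : b - a ≠ 0 := ne_of_gt h1
  have n2 : c - a ≠ 0 := ne_of_gt h2
  have n3 : c - b ≠ 0 := ne_of_gt h3
  have n4 : a - b ≠ 0 := by intro h; apply n1; linarith
  have n5 : a - c ≠ 0 := by intro h; apply n2; linarith
  have n6 : b - c ≠ 0 := by intro h; apply n3; linarith
  have hEq : DD f a b c = ((c-b)*f a - (c-a)*f b + (b-a)*f c)/((b-a)*((c-a)*(c-b))) := by
    unfold DD; field_simp; ring
  rw [hEq]
  exact div_pos (by linarith) hD

lemma DD_perm12 (f : ℝ → ℝ) (a b c : ℝ) : DD f a b c = DD f b a c := by unfold DD; ring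
lemma DD_perm23 (f : ℝ → ℝ) (a b c : ℝ) : DD f a b c = DD f a c b := by unfold DD; ring

lemma DD_pos' {f : ℝ → ℝ} {a b c : ℝ} (ha : 0 < a) (hb : 0 < b) (hc : 0 < c)
    (hab : a ≠ b) (hac : a ≠ c) (hbc : b ≠ c)
    (hchord : ∀ x y z : ℝ, 0 < x → x < y → y < z →
      (z-x)*f y < (z-y)*f x + (y-x)*f z) : 0 < DD f a b c := by
  rcases hab.lt_or_gt with h1 | h1
  · rcases hbc.lt_or_gt with h2 | h2
    · exact DD_pos h1 h2 (hchord a b c ha h1 h2)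
    · rcases hac.lt_or_gt with h3 | h3
      · rw [DD_perm23]; exact DD_pos h3 h2 (hchord a c b ha h3 h2)
      · rw [DD_perm23, DD_perm12]; exact DD_pos h3 h1 (hchord c a b hc h3 h1)
  · rcases hac.lt_or_gt with h3 | h3
    · rw [DD_perm12]; exact DD_pos h1 h3 (hchord b a c hb h1 h3)
    · rcases hbc.lt_or_gt with h2 | h2
      · rw [DD_perm12, DD_perm23]; exact DD_pos h2 h3 (hchord b c a hb h2 h3)
      · rw [DD_perm12, DD_perm23, DD_perm12]; exact DD_pos h2 h1 (hchord c b a hc h2 h1)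

lemma p1_pos {u : ℝ} (hu : 0 < u) : 0 < (u-1)*Real.exp u + 1 := by
  have hmono : StrictMonoOn (fun v : ℝ => (v-1)*Real.exp v + 1) (Set.Ici 0) := by
    apply strictMonoOn_of_deriv_pos (convex_Ici 0)
    · exact (((continuous_id.sub continuous_const).mul Real.continuous_exp).add
        continuous_const).continuousOn
    · intro x hx
      rw [interior_Ici] at hx
      have hd : HasDerivAt (fun v : ℝ => (v-1)*Real.exp v + 1)
          (1 * Real.exp x + (x-1)*Real.exp x) x :=
        (((hasDerivAt_id' x).sub_const 1).mul (Real.hasDerivAt_exp x)).add_const 1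
      rw [hd.deriv]
      have := Real.exp_pos x
      nlinarith [hx.out]
  have := hmono (Set.self_mem_Ici) (le_of_lt hu : (0:ℝ) ≤ u) hu
  simpa using this

lemma p2_pos {u : ℝ} (hu : 0 < u) : 0 < (u-2)*Real.exp u + u + 2 := by
  have hmono : StrictMonoOn (fun v : ℝ => (v-2)*Real.exp v + v + 2) (Set.Ici 0) := by
    apply strictMonoOn_of_deriv_pos (convex_Ici 0)
    · exact ((((continuous_id.sub continuous_const).mul Real.continuous_exp).add
        continuous_id).add continuous_const).continuousOn
    · intro x hx
      rw [interior_Ici] at hx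
      have hd : HasDerivAt (fun v : ℝ => (v-2)*Real.exp v + v + 2)
          (1 * Real.exp x + (x-2)*Real.exp x + 1 + 0) x :=
        (((((hasDerivAt_id' x).sub_const 2).mul (Real.hasDerivAt_exp x)).add
          (hasDerivAt_id' x)).add_const 2).congr_deriv (by ring)
      rw [hd.deriv]
      have h := p1_pos hx.out
      nlinarith
  have := hmono (Set.self_mem_Ici) (le_of_lt hu : (0:ℝ) ≤ u) hu
  simpa using this

noncomputable def phi (u : ℝ) : ℝ := u / (1 - Real.exp (-u))

lemma one_sub_exp_neg_pos {u : ℝ} (hu : 0 < u) : 0 < 1 - Real.exp (-u) := by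
  have : Real.exp (-u) < 1 := Real.exp_lt_one_iff.mpr (by linarith)
  linarith

noncomputable def phiD (u : ℝ) : ℝ :=
  (1 * (1 - Real.exp (-u)) - u * Real.exp (-u)) / (1 - Real.exp (-u))^2

lemma phi_hasDeriv {u : ℝ} (hu : 0 < u) : HasDerivAt phi (phiD u) u := by
  have hden : HasDerivAt (fun v : ℝ => 1 - Real.exp (-v)) (Real.exp (-u)) u := by
    have h1 : HasDerivAt (fun v : ℝ => Real.exp (-v)) (Real.exp (-u) * (-1)) u :=
      (Real.hasDerivAt_exp (-u)).comp u (hasDerivAt_neg u)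
    simpa using h1.const_sub 1
  have h2 := (hasDerivAt_id' u).div hden (ne_of_gt (one_sub_exp_neg_pos hu))
  unfold phi phiD
  exact h2

lemma phi_hasDeriv2 {u : ℝ} (hu : 0 < u) :
    HasDerivAt phiD
      ((u * Real.exp (-u) * (1 - Real.exp (-u))^2 -
        (1 * (1 - Real.exp (-u)) - u * Real.exp (-u)) *
          (2 * (1 - Real.exp (-u))^1 * Real.exp (-u))) / ((1 - Real.exp (-u))^2)^2) u := by
  have hexp : HasDerivAt (fun v : ℝ => Real.exp (-v)) (Real.exp (-u) * (-1)) u :=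
    (Real.hasDerivAt_exp (-u)).comp u (hasDerivAt_neg u)
  have hden : HasDerivAt (fun v : ℝ => 1 - Real.exp (-v)) (Real.exp (-u)) u := by
    simpa using hexp.const_sub 1
  have hnum : HasDerivAt (fun v : ℝ => 1 * (1 - Real.exp (-v)) - v * Real.exp (-v))
      (u * Real.exp (-u)) u := by
    have h2 : HasDerivAt (fun v : ℝ => v * Real.exp (-v))
        (1 * Real.exp (-u) + u * (Real.exp (-u) * (-1))) u :=
      (hasDerivAt_id' u).mul hexp
    have := (hden.const_mul 1).sub h2
    exact this.congr_deriv (by ring)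
  have hpow : HasDerivAt (fun v : ℝ => (1 - Real.exp (-v))^2)
      (2 * (1 - Real.exp (-u))^1 * Real.exp (-u)) u := by
    simpa using hden.fun_pow 2
  exact hnum.div hpow (pow_ne_zero 2 (ne_of_gt (one_sub_exp_neg_pos hu)))

lemma phiD2_pos {x : ℝ} (hx : 0 < x) :
    0 < (x * Real.exp (-x) * (1 - Real.exp (-x))^2 -
        (1 * (1 - Real.exp (-x)) - x * Real.exp (-x)) *
          (2 * (1 - Real.exp (-x))^1 * Real.exp (-x))) / ((1 - Real.exp (-x))^2)^2 := by
  have h1 : 0 < 1 - Real.exp (-x) := one_sub_exp_neg_pos hx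
  apply div_pos _ (by positivity)
  have hnum : x * Real.exp (-x) * (1 - Real.exp (-x))^2 -
      (1 * (1 - Real.exp (-x)) - x * Real.exp (-x)) *
        (2 * (1 - Real.exp (-x))^1 * Real.exp (-x))
      = (1 - Real.exp (-x)) * Real.exp (-x)^2 * ((x-2)*Real.exp x + x + 2) := by
    rw [Real.exp_neg]
    have hE : Real.exp x ≠ 0 := Real.exp_ne_zero x
    field_simp
    ring
  rw [hnum]
  have h2 := p2_pos hx
  have h3 : (0:ℝ) < Real.exp (-x)^2 := by positivity
  exact mul_pos (mul_pos h1 h3) h2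

lemma phi_strictConvex : StrictConvexOn ℝ (Set.Ioi 0) phi := by
  apply strictConvexOn_of_deriv2_pos (convex_Ioi 0)
  · apply ContinuousOn.div continuousOn_id
    · exact (continuous_const.sub (Real.continuous_exp.comp continuous_neg)).continuousOn
    · intro x hx; exact ne_of_gt (one_sub_exp_neg_pos hx)
  · intro x hx
    rw [interior_Ioi] at hx
    have h2 : deriv^[2] phi x = deriv (deriv phi) x := by
      rw [Function.iterate_succ_apply', Function.iterate_one]
    rw [h2]
    have hev : deriv phi =ᶠ[nhds x] phiD := by
      filter_upwards [IsOpen.mem_nhds isOpen_Ioi hx] with y hy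
      exact (phi_hasDeriv hy).deriv
    rw [hev.deriv_eq, (phi_hasDeriv2 hx).deriv]
    exact phiD2_pos hx

lemma chord_phiT {T : ℝ} (hT : 0 < T) (x y z : ℝ) (hx : 0 < x) (hxy : x < y) (hyz : y < z) :
    (z-x) * (y/(1-Real.exp (-(y*T)))) <
      (z-y) * (x/(1-Real.exp (-(x*T)))) + (y-x) * (z/(1-Real.exp (-(z*T)))) := by
  have hxT : x*T ∈ Set.Ioi (0:ℝ) := by simp; positivity
  have hzT : z*T ∈ Set.Ioi (0:ℝ) := by simp; nlinarith
  have h := chordIneq phi_strictConvex hxT hzT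
    (by nlinarith : x*T < y*T) (by nlinarith : y*T < z*T)
  have e1 : (z*T - x*T) * phi (y*T) = ((z-x) * (y/(1-Real.exp (-(y*T))))) * T^2 := by
    unfold phi; ring
  have e2 : (z*T - y*T) * phi (x*T) + (y*T - x*T) * phi (z*T) =
      ((z-y) * (x/(1-Real.exp (-(x*T)))) + (y-x) * (z/(1-Real.exp (-(z*T))))) * T^2 := by
    unfold phi; ring
  rw [e1, e2] at h
  exact (mul_lt_mul_iff_of_pos_right (by positivity)).mp h

lemma chord_expt {t : ℝ} (ht : 0 < t) (x y z : ℝ) (hx : 0 < x) (hxy : x < y) (hyz : y < z) :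
    (z-x) * Real.exp (-(y*t)) < (z-y) * Real.exp (-(x*t)) + (y-x) * Real.exp (-(z*t)) := by
  have h := chordIneq strictConvexOn_exp (Set.mem_univ (-(z*t))) (Set.mem_univ (-(x*t)))
    (by nlinarith : -(z*t) < -(y*t)) (by nlinarith : -(y*t) < -(x*t))
  have e1 : (-(x*t) - -(z*t)) * Real.exp (-(y*t)) = ((z-x) * Real.exp (-(y*t))) * t := by ring
  have e2 : (-(x*t) - -(y*t)) * Real.exp (-(z*t)) + (-(y*t) - -(z*t)) * Real.exp (-(x*t)) =
      ((z-y) * Real.exp (-(x*t)) + (y-x) * Real.exp (-(z*t))) * t := by ring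
  rw [e1, e2] at h
  exact (mul_lt_mul_iff_of_pos_right ht).mp h

noncomputable def Gc (a₁ a₂ a₃ g₁ g₂ t : ℝ) : ℝ :=
  g₁*g₂/((a₂-a₁)*(a₃-a₁)) * Real.exp (-(a₁*t))
  + g₁*g₂/((a₁-a₂)*(a₃-a₂)) * Real.exp (-(a₂*t))
  + g₁*g₂/((a₁-a₃)*(a₂-a₃)) * Real.exp (-(a₃*t))

noncomputable def Zd (a₁ a₂ a₃ g₁ g₂ T τ : ℝ) : ℝ :=
  g₁*g₂/((a₂-a₁)*(a₃-a₁)) * (Real.exp (-(a₁*τ)) * (-a₁) / (1 - Real.exp (-(a₁*T))))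
  + g₁*g₂/((a₁-a₂)*(a₃-a₂)) * (Real.exp (-(a₂*τ)) * (-a₂) / (1 - Real.exp (-(a₂*T))))
  + g₁*g₂/((a₁-a₃)*(a₂-a₃)) * (Real.exp (-(a₃*τ)) * (-a₃) / (1 - Real.exp (-(a₃*T))))

lemma hasDerivAt_exp_neg_mul (a τ : ℝ) :
    HasDerivAt (fun τ : ℝ => Real.exp (-(a*τ))) (Real.exp (-(a*τ)) * (-a)) τ := by
  have h1 : HasDerivAt (fun τ : ℝ => -(a*τ)) (-a) τ := by
    simpa using ((hasDerivAt_id' τ).const_mul a).fun_neg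
  exact (Real.hasDerivAt_exp (-(a*τ))).comp τ h1

lemma hasDerivAt_Zc (a₁ a₂ a₃ g₁ g₂ T τ : ℝ) :
    HasDerivAt (fun τ => Zc a₁ a₂ a₃ g₁ g₂ T τ) (Zd a₁ a₂ a₃ g₁ g₂ T τ) τ := by
  unfold Zc Zd
  exact ((((hasDerivAt_exp_neg_mul a₁ τ).div_const _).const_mul _).add
    (((hasDerivAt_exp_neg_mul a₂ τ).div_const _).const_mul _)).add
    (((hasDerivAt_exp_neg_mul a₃ τ).div_const _).const_mul _)

lemma exists_lt_left {f : ℝ → ℝ} {x s : ℝ} (hd : HasDerivAt f s x) (hs : s < 0)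
    (h0 : 0 < x) : ∃ y ∈ Set.Ioo 0 x, f x < f y := by
  have h1 := hasDerivAt_iff_tendsto_slope.mp hd
  have h2 : ∀ᶠ y in nhdsWithin x {x}ᶜ, slope f x y < 0 := h1.eventually_lt_const hs
  have h3 : nhdsWithin x (Set.Iio x) ≤ nhdsWithin x {x}ᶜ :=
    nhdsWithin_mono x (fun y hy => ne_of_lt hy)
  have h4 : Set.Ioo 0 x ∈ nhdsWithin x (Set.Iio x) :=
    Ioo_mem_nhdsLT_of_mem ⟨h0, le_refl x⟩
  have h2' : ∀ᶠ y in nhdsWithin x (Set.Iio x), slope f x y < 0 := h2.filter_mono h3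
  have h4' : ∀ᶠ y in nhdsWithin x (Set.Iio x), y ∈ Set.Ioo 0 x :=
    eventually_of_mem h4 (fun y hy => hy)
  obtain ⟨y, hy1, hy2⟩ := (h2'.and h4').exists
  refine ⟨y, hy2, ?_⟩
  rw [slope_def_field] at hy1
  have hyx : y - x < 0 := sub_neg.mpr hy2.2
  rcases div_neg_iff.mp hy1 with ⟨h, h'⟩ | ⟨h, h'⟩
  · linarith
  · linarith

lemma exists_lt_right {f : ℝ → ℝ} {x s b : ℝ} (hd : HasDerivAt f s x) (hs : s < 0)
    (hb : x < b) : ∃ y ∈ Set.Ioo x b, f y < f x := by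
  have h1 := hasDerivAt_iff_tendsto_slope.mp hd
  have h2 : ∀ᶠ y in nhdsWithin x {x}ᶜ, slope f x y < 0 := h1.eventually_lt_const hs
  have h3 : nhdsWithin x (Set.Ioi x) ≤ nhdsWithin x {x}ᶜ :=
    nhdsWithin_mono x (fun y hy => ne_of_gt hy)
  have h4 : Set.Ioo x b ∈ nhdsWithin x (Set.Ioi x) :=
    Ioo_mem_nhdsGT_of_mem ⟨le_refl x, hb⟩
  have h2' : ∀ᶠ y in nhdsWithin x (Set.Ioi x), slope f x y < 0 := h2.filter_mono h3
  have h4' : ∀ᶠ y in nhdsWithin x (Set.Ioi x), y ∈ Set.Ioo x b :=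
    eventually_of_mem h4 (fun y hy => hy)
  obtain ⟨y, hy1, hy2⟩ := (h2'.and h4').exists
  refine ⟨y, hy2, ?_⟩
  rw [slope_def_field] at hy1
  have hyx : 0 < y - x := sub_pos.mpr hy2.1
  rcases div_neg_iff.mp hy1 with ⟨h, h'⟩ | ⟨h, h'⟩
  · linarith
  · linarith

section Main
variable {a₁ a₂ a₃ g₁ g₂ T : ℝ}
  (ha₁ : 0 < a₁) (ha₂ : 0 < a₂) (ha₃ : 0 < a₃)
  (h₁₂ : a₁ ≠ a₂) (h₁₃ : a₁ ≠ a₃) (h₂₃ : a₂ ≠ a₃)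
  (hg₁ : 0 < g₁) (hg₂ : 0 < g₂) (hT : 0 < T)
include ha₁ ha₂ ha₃ h₁₂ h₁₃ h₂₃ hg₁ hg₂ hT

lemma Gc_pos {t : ℝ} (ht : 0 < t) : 0 < Gc a₁ a₂ a₃ g₁ g₂ t := by
  have hdd : 0 < DD (fun x => Real.exp (-(x*t))) a₁ a₂ a₃ :=
    DD_pos' ha₁ ha₂ ha₃ h₁₂ h₁₃ h₂₃ (fun x y z hx hxy hyz => chord_expt ht x y z hx hxy hyz)
  have hEq : Gc a₁ a₂ a₃ g₁ g₂ t = g₁*g₂ * DD (fun x => Real.exp (-(x*t))) a₁ a₂ a₃ := by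
    unfold Gc DD; ring
  rw [hEq]
  positivity

lemma Zd_zero_neg : Zd a₁ a₂ a₃ g₁ g₂ T 0 < 0 := by
  have hdd : 0 < DD (fun x => x/(1-Real.exp (-(x*T)))) a₁ a₂ a₃ :=
    DD_pos' ha₁ ha₂ ha₃ h₁₂ h₁₃ h₂₃ (fun x y z hx hxy hyz => chord_phiT hT x y z hx hxy hyz)
  have hEq : Zd a₁ a₂ a₃ g₁ g₂ T 0 =
      -(g₁*g₂ * DD (fun x => x/(1-Real.exp (-(x*T)))) a₁ a₂ a₃) := by
    unfold Zd DD
    rw [show -(a₁*(0:ℝ)) = 0 by ring, show -(a₂*(0:ℝ)) = 0 by ring,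
      show -(a₃*(0:ℝ)) = 0 by ring, Real.exp_zero]
    ring
  rw [hEq]
  have : 0 < g₁*g₂ * DD (fun x => x/(1-Real.exp (-(x*T)))) a₁ a₂ a₃ := by positivity
  linarith

lemma denoms_ne :
    (1 - Real.exp (-(a₁*T)) ≠ 0) ∧ (1 - Real.exp (-(a₂*T)) ≠ 0) ∧
      (1 - Real.exp (-(a₃*T)) ≠ 0) := by
  refine ⟨ne_of_gt (one_sub_exp_neg_pos ?_), ne_of_gt (one_sub_exp_neg_pos ?_),
    ne_of_gt (one_sub_exp_neg_pos ?_)⟩ <;> positivity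

end Main

section Main2
variable {a₁ a₂ a₃ g₁ g₂ T : ℝ}
  (ha₁ : 0 < a₁) (ha₂ : 0 < a₂) (ha₃ : 0 < a₃)
  (h₁₂ : a₁ ≠ a₂) (h₁₃ : a₁ ≠ a₃) (h₂₃ : a₂ ≠ a₃)
  (hg₁ : 0 < g₁) (hg₂ : 0 < g₂) (hT : 0 < T)
include ha₁ ha₂ ha₃ h₁₂ h₁₃ h₂₃ hg₁ hg₂ hT

lemma ZdT_eq : Zd a₁ a₂ a₃ g₁ g₂ T T = Zd a₁ a₂ a₃ g₁ g₂ T 0 := by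
  obtain ⟨hD1, hD2, hD3⟩ := denoms_ne ha₁ ha₂ ha₃ h₁₂ h₁₃ h₂₃ hg₁ hg₂ hT
  have h12 : a₂ - a₁ ≠ 0 := sub_ne_zero.mpr (Ne.symm h₁₂)
  have h13 : a₃ - a₁ ≠ 0 := sub_ne_zero.mpr (Ne.symm h₁₃)
  have h23 : a₃ - a₂ ≠ 0 := sub_ne_zero.mpr (Ne.symm h₂₃)
  have h21 : a₁ - a₂ ≠ 0 := sub_ne_zero.mpr h₁₂
  have h31 : a₁ - a₃ ≠ 0 := sub_ne_zero.mpr h₁₃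
  have h32 : a₂ - a₃ ≠ 0 := sub_ne_zero.mpr h₂₃
  have key : ∀ c a E : ℝ, 1 - E ≠ 0 →
      c * (E * -a / (1 - E)) = c * (1 * -a / (1 - E)) + c * a := by
    intro c a E h; field_simp; ring
  have hsum : g₁*g₂/((a₂-a₁)*(a₃-a₁)) * a₁ + g₁*g₂/((a₁-a₂)*(a₃-a₂)) * a₂
      + g₁*g₂/((a₁-a₃)*(a₂-a₃)) * a₃ = 0 := by
    field_simp
    ring
  unfold Zd
  rw [show -(a₁*(0:ℝ)) = 0 by ring, show -(a₂*(0:ℝ)) = 0 by ring,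
    show -(a₃*(0:ℝ)) = 0 by ring, Real.exp_zero]
  have k1 := key (g₁*g₂/((a₂-a₁)*(a₃-a₁))) a₁ (Real.exp (-(a₁*T))) hD1
  have k2 := key (g₁*g₂/((a₁-a₂)*(a₃-a₂))) a₂ (Real.exp (-(a₂*T))) hD2
  have k3 := key (g₁*g₂/((a₁-a₃)*(a₂-a₃))) a₃ (Real.exp (-(a₃*T))) hD3
  rw [show -(a₁*T) = -(a₁*T) from rfl]
  linarith [k1, k2, k3, hsum]

lemma Zc0T_eq : Zc a₁ a₂ a₃ g₁ g₂ T 0 = Zc a₁ a₂ a₃ g₁ g₂ T T := by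
  obtain ⟨hD1, hD2, hD3⟩ := denoms_ne ha₁ ha₂ ha₃ h₁₂ h₁₃ h₂₃ hg₁ hg₂ hT
  have h12 : a₂ - a₁ ≠ 0 := sub_ne_zero.mpr (Ne.symm h₁₂)
  have h13 : a₃ - a₁ ≠ 0 := sub_ne_zero.mpr (Ne.symm h₁₃)
  have h23 : a₃ - a₂ ≠ 0 := sub_ne_zero.mpr (Ne.symm h₂₃)
  have h21 : a₁ - a₂ ≠ 0 := sub_ne_zero.mpr h₁₂
  have h31 : a₁ - a₃ ≠ 0 := sub_ne_zero.mpr h₁₃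
  have h32 : a₂ - a₃ ≠ 0 := sub_ne_zero.mpr h₂₃
  have key : ∀ c E : ℝ, 1 - E ≠ 0 → c * (E / (1 - E)) = c * (1 / (1 - E)) - c := by
    intro c E h; field_simp; ring
  have hsum : g₁*g₂/((a₂-a₁)*(a₃-a₁)) + g₁*g₂/((a₁-a₂)*(a₃-a₂))
      + g₁*g₂/((a₁-a₃)*(a₂-a₃)) = 0 := by
    field_simp
    ring
  unfold Zc
  rw [show -(a₁*(0:ℝ)) = 0 by ring, show -(a₂*(0:ℝ)) = 0 by ring,
    show -(a₃*(0:ℝ)) = 0 by ring, Real.exp_zero]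
  have k1 := key (g₁*g₂/((a₂-a₁)*(a₃-a₁))) (Real.exp (-(a₁*T))) hD1
  have k2 := key (g₁*g₂/((a₁-a₂)*(a₃-a₂))) (Real.exp (-(a₂*T))) hD2
  have k3 := key (g₁*g₂/((a₁-a₃)*(a₂-a₃))) (Real.exp (-(a₃*T))) hD3
  linarith [k1, k2, k3, hsum]

lemma Zc_step (s : ℝ) : Zc a₁ a₂ a₃ g₁ g₂ T s
    = Gc a₁ a₂ a₃ g₁ g₂ s + Zc a₁ a₂ a₃ g₁ g₂ T (s + T) := by
  obtain ⟨hD1, hD2, hD3⟩ := denoms_ne ha₁ ha₂ ha₃ h₁₂ h₁₃ h₂₃ hg₁ hg₂ hT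
  have key : ∀ c x E : ℝ, 1 - E ≠ 0 →
      c * (x / (1 - E)) = c * x + c * (x * E / (1 - E)) := by
    intro c x E h; field_simp; ring
  unfold Zc Gc
  rw [show -(a₁*(s+T)) = -(a₁*s) + -(a₁*T) by ring, Real.exp_add,
    show -(a₂*(s+T)) = -(a₂*s) + -(a₂*T) by ring, Real.exp_add,
    show -(a₃*(s+T)) = -(a₃*s) + -(a₃*T) by ring, Real.exp_add]
  have k1 := key (g₁*g₂/((a₂-a₁)*(a₃-a₁))) (Real.exp (-(a₁*s))) (Real.exp (-(a₁*T))) hD1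
  have k2 := key (g₁*g₂/((a₁-a₂)*(a₃-a₂))) (Real.exp (-(a₂*s))) (Real.exp (-(a₂*T))) hD2
  have k3 := key (g₁*g₂/((a₁-a₃)*(a₂-a₃))) (Real.exp (-(a₃*s))) (Real.exp (-(a₃*T))) hD3
  linarith [k1, k2, k3]

lemma Zc_tendsto (τ : ℝ) :
    Tendsto (fun n : ℕ => Zc a₁ a₂ a₃ g₁ g₂ T (τ + (n:ℝ)*T)) atTop (nhds 0) := by
  have key : ∀ (a : ℝ), Tendsto
      (fun n : ℕ => Real.exp (-(a*(τ + (n:ℝ)*T))) ) atTop (nhds 0) → True := fun _ _ => trivial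
  have hterm : ∀ (a : ℝ), 0 < a → Tendsto
      (fun n : ℕ => Real.exp (-(a*(τ + (n:ℝ)*T)))) atTop (nhds 0) := by
    intro a ha
    have hEq : ∀ n : ℕ, Real.exp (-(a*(τ + (n:ℝ)*T)))
        = Real.exp (-(a*τ)) * Real.exp (-(a*T)) ^ n := by
      intro n
      rw [← Real.exp_nat_mul, ← Real.exp_add]
      ring_nf
    simp only [hEq]
    have h1 : |Real.exp (-(a*T))| < 1 := by
      rw [abs_of_pos (Real.exp_pos _)]
      exact Real.exp_lt_one_iff.mpr (by nlinarith)
    have := (tendsto_pow_atTop_nhds_zero_of_abs_lt_one h1).const_mul (Real.exp (-(a*τ)))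
    simpa using this
  unfold Zc
  have h := (((hterm a₁ ha₁).div_const (1 - Real.exp (-(a₁*T)))).const_mul
      (g₁*g₂/((a₂-a₁)*(a₃-a₁)))).add
    ((((hterm a₂ ha₂).div_const (1 - Real.exp (-(a₂*T)))).const_mul
      (g₁*g₂/((a₁-a₂)*(a₃-a₂)))).add
    (((hterm a₃ ha₃).div_const (1 - Real.exp (-(a₃*T)))).const_mul
      (g₁*g₂/((a₁-a₃)*(a₂-a₃)))))
  simpa [add_assoc] using h

lemma Zc_min_pos {τ : ℝ} (hτ : 0 < τ) : 0 < Zc a₁ a₂ a₃ g₁ g₂ T τ := by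
  have hstep := Zc_step ha₁ ha₂ ha₃ h₁₂ h₁₃ h₂₃ hg₁ hg₂ hT
  have hind : ∀ n : ℕ, Gc a₁ a₂ a₃ g₁ g₂ τ + Zc a₁ a₂ a₃ g₁ g₂ T (τ + ((n:ℝ)+1)*T)
      ≤ Zc a₁ a₂ a₃ g₁ g₂ T τ := by
    intro n
    induction n with
    | zero => simp [hstep τ]
    | succ m ih =>
      have h1 := hstep (τ + ((m:ℝ)+1)*T)
      have h2 : 0 < Gc a₁ a₂ a₃ g₁ g₂ (τ + ((m:ℝ)+1)*T) := by
        apply Gc_pos ha₁ ha₂ ha₃ h₁₂ h₁₃ h₂₃ hg₁ hg₂ hT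
        have : (0:ℝ) ≤ (m:ℝ) := Nat.cast_nonneg m
        nlinarith
      have e : τ + ((m:ℝ)+1)*T + T = τ + ((m:ℝ)+1+1)*T := by ring
      rw [e] at h1
      push_cast
      linarith [h1, h2, ih]
  have htend : Tendsto (fun n : ℕ => Gc a₁ a₂ a₃ g₁ g₂ τ +
      Zc a₁ a₂ a₃ g₁ g₂ T (τ + ((n:ℝ)+1)*T)) atTop (nhds (Gc a₁ a₂ a₃ g₁ g₂ τ + 0)) := by
    apply Tendsto.const_add
    have h := (Zc_tendsto ha₁ ha₂ ha₃ h₁₂ h₁₃ h₂₃ hg₁ hg₂ hT τ).comp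
      (tendsto_add_atTop_nat 1)
    simpa [Function.comp_def, push_cast] using h
  have hle : Gc a₁ a₂ a₃ g₁ g₂ τ + 0 ≤ Zc a₁ a₂ a₃ g₁ g₂ T τ :=
    le_of_tendsto htend (Filter.Eventually.of_forall hind)
  have := Gc_pos ha₁ ha₂ ha₃ h₁₂ h₁₃ h₂₃ hg₁ hg₂ hT hτ
  linarith

end Main2


theorem output_min_max_vs_X3 (a₁ a₂ a₃ g₁ g₂ : ℝ)
    (ha₁ : 0 < a₁) (ha₂ : 0 < a₂) (ha₃ : 0 < a₃)
    (h₁₂ : a₁ ≠ a₂) (h₁₃ : a₁ ≠ a₃) (h₂₃ : a₂ ≠ a₃)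
    (hg₁ : 0 < g₁) (hg₂ : 0 < g₂) (T lam τ₁ τ₂ : ℝ) (hT : 0 < T) (hlam : 0 < lam)
    (hτ₁ : 0 < τ₁) (hτ₁₂ : τ₁ < τ₂) (hτ₂ : τ₂ < T)
    (hmin : IsMinOn (fun τ => zfun a₁ a₂ a₃ g₁ g₂ τ T) (Set.Icc 0 T) τ₁)
    (hmax : IsMaxOn (fun τ => zfun a₁ a₂ a₃ g₁ g₂ τ T) (Set.Icc 0 T) τ₂) :
    0 < lam * zfun a₁ a₂ a₃ g₁ g₂ τ₁ T ∧
    lam * zfun a₁ a₂ a₃ g₁ g₂ τ₁ T < lam * zfun a₁ a₂ a₃ g₁ g₂ T T ∧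
    lam * zfun a₁ a₂ a₃ g₁ g₂ T T < lam * zfun a₁ a₂ a₃ g₁ g₂ τ₂ T := by
  have h12 : a₂ - a₁ ≠ 0 := sub_ne_zero.mpr (Ne.symm h₁₂)
  have h13 : a₃ - a₁ ≠ 0 := sub_ne_zero.mpr (Ne.symm h₁₃)
  have h23 : a₃ - a₂ ≠ 0 := sub_ne_zero.mpr (Ne.symm h₂₃)
  obtain ⟨hD1, hD2, hD3⟩ := denoms_ne ha₁ ha₂ ha₃ h₁₂ h₁₃ h₂₃ hg₁ hg₂ hT
  have hzZ : ∀ τ, zfun a₁ a₂ a₃ g₁ g₂ τ T = Zc a₁ a₂ a₃ g₁ g₂ T τ :=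
    zfun_eq g₁ g₂ h12 h13 h23 hD1 hD2 hD3
  have hmin' : ∀ x ∈ Set.Icc 0 T, Zc a₁ a₂ a₃ g₁ g₂ T τ₁ ≤ Zc a₁ a₂ a₃ g₁ g₂ T x := by
    intro x hx
    have := isMinOn_iff.mp hmin x hx
    simpa [hzZ] using this
  have hmax' : ∀ x ∈ Set.Icc 0 T, Zc a₁ a₂ a₃ g₁ g₂ T x ≤ Zc a₁ a₂ a₃ g₁ g₂ T τ₂ := by
    intro x hx
    have := isMaxOn_iff.mp hmax x hx
    simpa [hzZ] using this
  have hS0 : Zd a₁ a₂ a₃ g₁ g₂ T 0 < 0 :=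
    Zd_zero_neg ha₁ ha₂ ha₃ h₁₂ h₁₃ h₂₃ hg₁ hg₂ hT
  have hST : Zd a₁ a₂ a₃ g₁ g₂ T T < 0 := by
    rw [ZdT_eq ha₁ ha₂ ha₃ h₁₂ h₁₃ h₂₃ hg₁ hg₂ hT]; exact hS0
  obtain ⟨y1, hy1mem, hy1⟩ :=
    exists_lt_right (hasDerivAt_Zc a₁ a₂ a₃ g₁ g₂ T 0) hS0 hT
  obtain ⟨y2, hy2mem, hy2⟩ :=
    exists_lt_left (hasDerivAt_Zc a₁ a₂ a₃ g₁ g₂ T T) hST hT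
  have e0T : Zc a₁ a₂ a₃ g₁ g₂ T 0 = Zc a₁ a₂ a₃ g₁ g₂ T T :=
    Zc0T_eq ha₁ ha₂ ha₃ h₁₂ h₁₃ h₂₃ hg₁ hg₂ hT
  have hzT : Zc a₁ a₂ a₃ g₁ g₂ T τ₁ < Zc a₁ a₂ a₃ g₁ g₂ T T := by
    have h1 : Zc a₁ a₂ a₃ g₁ g₂ T τ₁ ≤ Zc a₁ a₂ a₃ g₁ g₂ T y1 :=
      hmin' y1 ⟨le_of_lt hy1mem.1, le_of_lt hy1mem.2⟩
    calc Zc a₁ a₂ a₃ g₁ g₂ T τ₁ ≤ Zc a₁ a₂ a₃ g₁ g₂ T y1 := h1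
      _ < Zc a₁ a₂ a₃ g₁ g₂ T 0 := hy1
      _ = Zc a₁ a₂ a₃ g₁ g₂ T T := e0T
  have hzT2 : Zc a₁ a₂ a₃ g₁ g₂ T T < Zc a₁ a₂ a₃ g₁ g₂ T τ₂ := by
    have h1 : Zc a₁ a₂ a₃ g₁ g₂ T y2 ≤ Zc a₁ a₂ a₃ g₁ g₂ T τ₂ :=
      hmax' y2 ⟨le_of_lt hy2mem.1, le_of_lt hy2mem.2⟩
    linarith
  have hpos : 0 < Zc a₁ a₂ a₃ g₁ g₂ T τ₁ :=
    Zc_min_pos ha₁ ha₂ ha₃ h₁₂ h₁₃ h₂₃ hg₁ hg₂ hT hτ₁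
  refine ⟨?_, ?_, ?_⟩
  · rw [hzZ]; exact mul_pos hlam hpos
  · rw [hzZ, hzZ]; exact mul_lt_mul_of_pos_left hzT hlam
  · rw [hzZ, hzZ]; exact mul_lt_mul_of_pos_left hzT2 hlam
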